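/- arXiv:0802.0295 — 4 statements merged into one kernel-verified Lean document; each statement's English description precedes it below -/
import Mathlib

section
/- Let n ≥ 3 be an integer, ξ ∈ ℝⁿ and ε > 0, and let u_{(ξ,ε)} be the standard bubble. Then the function φ(x) = ((ε² − |x−ξ|²)/(ε² + |x−ξ|²)) · u_{(ξ,ε)}(x) satisfies the linearized equation Δφ(x) + n(n+2) · u_{(ξ,ε)}(x)^{4/(n−2)} · φ(x) = 0 for every x ∈ ℝⁿ. -/
/-- The standard bubble `u_{(ξ,ε)}(x) = (ε/(ε² + |x−ξ|²))^{(n−2)/2}` on `ℝⁿ`. -/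
noncomputable def bubble {n : ℕ} (ξ : EuclideanSpace ℝ (Fin n)) (ε : ℝ)
    (x : EuclideanSpace ℝ (Fin n)) : ℝ :=
  (ε / (ε ^ 2 + ‖x - ξ‖ ^ 2)) ^ (((n : ℝ) - 2) / 2)

/-- The Euclidean Laplacian: the sum of the second partial derivatives in the
coordinate directions. -/
noncomputable def eLaplacian {n : ℕ} (f : EuclideanSpace ℝ (Fin n) → ℝ)
    (x : EuclideanSpace ℝ (Fin n)) : ℝ :=
  ∑ i : Fin n,
    iteratedFDeriv ℝ 2 f x ![EuclideanSpace.single i 1, EuclideanSpace.single i 1]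

open Real

variable {n : ℕ}

lemma hasFDerivAt_normsq (ξ x : EuclideanSpace ℝ (Fin n)) :
    HasFDerivAt (fun y : EuclideanSpace ℝ (Fin n) => ‖y - ξ‖ ^ 2)
      ((2 : ℝ) • (innerSL ℝ (x - ξ))) x := by
  have h : HasFDerivAt (fun y : EuclideanSpace ℝ (Fin n) => y - ξ)
      (ContinuousLinearMap.id ℝ _) x := (hasFDerivAt_id x).sub_const ξ
  have key := HasFDerivAt.inner ℝ h h
  have heq : (fun y : EuclideanSpace ℝ (Fin n) => ‖y - ξ‖ ^ 2)
      = fun y => (inner ℝ (y - ξ) (y - ξ) : ℝ) :=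
    funext fun y => (real_inner_self_eq_norm_sq _).symm
  rw [heq]
  refine key.congr_fderiv ?_
  ext v
  simp only [ContinuousLinearMap.smul_apply, innerSL_apply_apply, ContinuousLinearMap.comp_apply,
    ContinuousLinearMap.prod_apply, ContinuousLinearMap.id_apply, fderivInnerCLM_apply,
    real_inner_comm v (x - ξ), smul_eq_mul]
  ring

lemma hasDerivAt_g (ε p C t : ℝ) (hA : 0 < ε ^ 2 + t) :
    HasDerivAt (fun u => C * ((ε ^ 2 - u) * (ε ^ 2 + u) ^ p))
      (C * (-((ε ^ 2 + t) ^ p) + p * (ε ^ 2 - t) * (ε ^ 2 + t) ^ (p - 1))) t := by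
  have hA' : ε ^ 2 + t ≠ 0 := ne_of_gt hA
  have h1 : HasDerivAt (fun u : ℝ => ε ^ 2 + u) 1 t := by
    simpa using (hasDerivAt_id t).const_add (ε ^ 2)
  have h2 : HasDerivAt (fun u : ℝ => (ε ^ 2 + u) ^ p)
      (p * (ε ^ 2 + t) ^ (p - 1)) t := by
    exact ((Real.hasDerivAt_rpow_const (Or.inl hA')).comp t h1).congr_deriv (by ring)
  have h3 : HasDerivAt (fun u : ℝ => ε ^ 2 - u) (-1) t := by
    simpa using ((hasDerivAt_id t).const_sub (ε ^ 2))
  have h4 := (h3.mul h2).const_mul C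
  exact h4.congr_deriv (by ring)

lemma hasDerivAt_g1 (ε p C t : ℝ) (hA : 0 < ε ^ 2 + t) :
    HasDerivAt (fun u => C * (-((ε ^ 2 + u) ^ p) + p * (ε ^ 2 - u) * (ε ^ 2 + u) ^ (p - 1)))
      (C * (-(2 * p) * (ε ^ 2 + t) ^ (p - 1) + p * (p - 1) * (ε ^ 2 - t) * (ε ^ 2 + t) ^ (p - 2))) t := by
  have hA' : ε ^ 2 + t ≠ 0 := ne_of_gt hA
  have h1 : HasDerivAt (fun u : ℝ => ε ^ 2 + u) 1 t := by
    simpa using (hasDerivAt_id t).const_add (ε ^ 2)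
  have h2 : HasDerivAt (fun u : ℝ => (ε ^ 2 + u) ^ p)
      (p * (ε ^ 2 + t) ^ (p - 1)) t := by
    exact ((Real.hasDerivAt_rpow_const (Or.inl hA')).comp t h1).congr_deriv (by ring)
  have h2' : HasDerivAt (fun u : ℝ => (ε ^ 2 + u) ^ (p - 1))
      ((p - 1) * (ε ^ 2 + t) ^ (p - 1 - 1)) t := by
    exact ((Real.hasDerivAt_rpow_const (Or.inl hA')).comp t h1).congr_deriv (by ring)
  have h3 : HasDerivAt (fun u : ℝ => p * (ε ^ 2 - u)) (-p) t := by
    simpa using ((hasDerivAt_id t).const_sub (ε ^ 2)).const_mul p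
  have h4 := ((h2.neg).add (h3.mul h2')).const_mul C
  refine h4.congr_deriv ?_
  have : p - 1 - 1 = p - 2 := by ring
  rw [this]
  ring

lemma final_alg (n ε t C p : ℝ) (hA : 0 < ε ^ 2 + t) (hpdef : p = -(n / 2)) :
    (n : ℝ) * (2 * (C * (-((ε ^ 2 + t) ^ p) +
        p * (ε ^ 2 - t) * (ε ^ 2 + t) ^ (p - 1))))
      + 4 * (C * (-(2 * p) * (ε ^ 2 + t) ^ (p - 1) +
        p * (p - 1) * (ε ^ 2 - t) * (ε ^ 2 + t) ^ (p - 2))) * t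
      + n * (n + 2) * (ε ^ 2 * ((ε ^ 2 + t) ^ 2)⁻¹) *
        (C * ((ε ^ 2 - t) * (ε ^ 2 + t) ^ p)) = 0 := by
  set A := ε ^ 2 + t with hAdef
  have hA0 : A ≠ 0 := ne_of_gt hA
  have e1 : A ^ p = A ^ (p - 2) * A ^ 2 := by
    rw [← Real.rpow_natCast A 2, ← Real.rpow_add hA]
    norm_num
  have e2 : A ^ (p - 1) = A ^ (p - 2) * A := by
    have : A ^ (p - 2) * A = A ^ (p - 2) * A ^ (1 : ℝ) := by rw [Real.rpow_one]
    rw [this, ← Real.rpow_add hA, show p - 2 + 1 = p - 1 by ring]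
  rw [e1, e2]
  have hn : n = -(2 * p) := by rw [hpdef]; ring
  rw [hn]
  field_simp
  ring

theorem stmt_1 (n : ℕ) (hn : 3 ≤ n) (ξ : EuclideanSpace ℝ (Fin n)) (ε : ℝ) (hε : 0 < ε)
    (φ : EuclideanSpace ℝ (Fin n) → ℝ)
    (hφ : ∀ x, φ x = (ε ^ 2 - ‖x - ξ‖ ^ 2) / (ε ^ 2 + ‖x - ξ‖ ^ 2) * bubble ξ ε x) :
    ∀ x, eLaplacian φ x
        + (n : ℝ) * ((n : ℝ) + 2) * bubble ξ ε x ^ ((4 : ℝ) / ((n : ℝ) - 2)) * φ x = 0 := by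
  have hn2 : (0 : ℝ) < (n : ℝ) - 2 := by
    have : (3 : ℝ) ≤ (n : ℝ) := by exact_mod_cast hn
    linarith
  set q : ℝ := ((n : ℝ) - 2) / 2 with hq
  set p : ℝ := -((n : ℝ) / 2) with hp
  set C : ℝ := ε ^ q with hC
  set s : EuclideanSpace ℝ (Fin n) → ℝ := fun y => ‖y - ξ‖ ^ 2 with hs
  have hA : ∀ y, 0 < ε ^ 2 + s y := fun y => by positivity
  -- φ as g ∘ s
  have hφg : φ = fun y => C * ((ε ^ 2 - s y) * (ε ^ 2 + s y) ^ p) := by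
    funext y
    rw [hφ y]
    unfold bubble
    have hA' := hA y
    have hAq : (0 : ℝ) < (ε ^ 2 + s y) ^ q := Real.rpow_pos_of_pos hA' q
    have hdiv : (ε / (ε ^ 2 + ‖y - ξ‖ ^ 2)) ^ q = ε ^ q / (ε ^ 2 + s y) ^ q :=
      Real.div_rpow hε.le (hA y).le q
    have hApq : (ε ^ 2 + s y) ^ p = ((ε ^ 2 + s y) ^ q * (ε ^ 2 + s y))⁻¹ := by
      have h1 : (ε ^ 2 + s y) ^ q * (ε ^ 2 + s y) = (ε ^ 2 + s y) ^ (q + 1) := by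
        nth_rewrite 2 [← Real.rpow_one (ε ^ 2 + s y)]
        rw [← Real.rpow_add hA']
      rw [h1, ← Real.rpow_neg (hA y).le, show -(q+1) = p by rw [hq, hp]; ring]
    rw [hdiv, hApq, hC]
    have : s y = ‖y - ξ‖ ^ 2 := rfl
    rw [← this]
    field_simp
  -- first derivative of φ
  set F : EuclideanSpace ℝ (Fin n) → (EuclideanSpace ℝ (Fin n) →L[ℝ] ℝ) :=
    fun y => (C * (-((ε ^ 2 + s y) ^ p) + p * (ε ^ 2 - s y) * (ε ^ 2 + s y) ^ (p - 1))) •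
      ((2 : ℝ) • innerSL ℝ (y - ξ)) with hF
  have hFd : ∀ y, HasFDerivAt φ (F y) y := by
    intro y
    rw [hφg]
    exact (hasDerivAt_g ε p C (s y) (hA y)).comp_hasFDerivAt y (hasFDerivAt_normsq ξ y)
  have hfderiv : fderiv ℝ φ = F := funext fun y => (hFd y).fderiv
  intro x
  -- second derivative at x
  have hc : HasFDerivAt
      (fun y => C * (-((ε ^ 2 + s y) ^ p) + p * (ε ^ 2 - s y) * (ε ^ 2 + s y) ^ (p - 1)))
      ((C * (-(2 * p) * (ε ^ 2 + s x) ^ (p - 1) +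
          p * (p - 1) * (ε ^ 2 - s x) * (ε ^ 2 + s x) ^ (p - 2))) •
        ((2 : ℝ) • innerSL ℝ (x - ξ))) x :=
    (hasDerivAt_g1 ε p C (s x) (hA x)).comp_hasFDerivAt x (hasFDerivAt_normsq ξ x)
  have hlin : HasFDerivAt (fun y : EuclideanSpace ℝ (Fin n) => (2 : ℝ) • innerSL ℝ (y - ξ))
      ((2 : ℝ) • (innerSL ℝ : EuclideanSpace ℝ (Fin n) →L[ℝ] _)) x := by
    have h0 : (fun y : EuclideanSpace ℝ (Fin n) => (2 : ℝ) • innerSL ℝ (y - ξ))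
        = fun y => ((2 : ℝ) • (innerSL ℝ : EuclideanSpace ℝ (Fin n) →L[ℝ] _)) y
          - ((2 : ℝ) • (innerSL ℝ : EuclideanSpace ℝ (Fin n) →L[ℝ] _)) ξ := by
      funext y
      simp [smul_sub]
    rw [h0]
    exact (((2 : ℝ) • (innerSL ℝ : EuclideanSpace ℝ (Fin n) →L[ℝ] _)).hasFDerivAt).sub_const _
  have hFF := HasFDerivAt.smul hc hlin
  change HasFDerivAt F _ x at hFF
  have hsnd := hFF.fderiv
  -- evaluate the Laplacian
  set t := s x with ht
  set g1 : ℝ := C * (-((ε ^ 2 + t) ^ p) + p * (ε ^ 2 - t) * (ε ^ 2 + t) ^ (p - 1)) with hg1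
  set g2 : ℝ := C * (-(2 * p) * (ε ^ 2 + t) ^ (p - 1) +
      p * (p - 1) * (ε ^ 2 - t) * (ε ^ 2 + t) ^ (p - 2)) with hg2
  have hLap : eLaplacian φ x = (n : ℝ) * (2 * g1) + 4 * g2 * t := by
    unfold eLaplacian
    have hterm : ∀ i : Fin n,
        iteratedFDeriv ℝ 2 φ x ![EuclideanSpace.single i 1, EuclideanSpace.single i 1]
          = 2 * g1 + 4 * g2 * ((x - ξ) i) ^ 2 := by
      intro i
      rw [iteratedFDeriv_two_apply]
      simp only [Matrix.cons_val_zero, Matrix.cons_val_one, Matrix.head_cons]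
      rw [hfderiv, hsnd]
      have hinner1 : (inner ℝ (x - ξ) (EuclideanSpace.single i (1:ℝ)) : ℝ) = (x - ξ) i := by
        rw [EuclideanSpace.inner_single_right]
        simp
      have hinner2 : (inner ℝ (EuclideanSpace.single i (1:ℝ)) (EuclideanSpace.single i (1:ℝ)) : ℝ) = 1 := by
        rw [EuclideanSpace.inner_single_right]
        simp
      have hinner3 : ∀ v w : EuclideanSpace ℝ (Fin n),
          (innerSL ℝ : EuclideanSpace ℝ (Fin n) →L[ℝ] _) v w = inner ℝ v w := fun _ _ => rfl
      simp only [ContinuousLinearMap.add_apply, ContinuousLinearMap.smul_apply,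
        ContinuousLinearMap.smulRight_apply, innerSL_apply_apply, smul_eq_mul,
        hinner1, hinner2, hinner3]
      ring
    rw [Finset.sum_congr rfl fun i _ => hterm i, Finset.sum_add_distrib,
      Finset.sum_const, ← Finset.mul_sum]
    have hsum : ∑ i : Fin n, ((x - ξ) i) ^ 2 = t := by
      have h0 : t = ‖x - ξ‖ ^ 2 := rfl
      rw [h0, ← real_inner_self_eq_norm_sq, PiLp.inner_apply]
      apply Finset.sum_congr rfl
      intro i _
      simp [RCLike.inner_apply, sq]
    rw [hsum]
    simp [Finset.card_univ]
    try ring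
  -- the bubble power
  have hbp : bubble ξ ε x ^ ((4 : ℝ) / ((n : ℝ) - 2)) = ε ^ 2 * ((ε ^ 2 + t) ^ 2)⁻¹ := by
    have h1 : bubble ξ ε x = (ε / (ε ^ 2 + t)) ^ q := rfl
    rw [h1, ← Real.rpow_mul (by positivity : (0:ℝ) ≤ ε / (ε ^ 2 + t)),
      show q * ((4 : ℝ) / ((n : ℝ) - 2)) = ((2:ℕ):ℝ) by
        rw [hq]; push_cast; field_simp; ring,
      Real.rpow_natCast, div_pow]
    field_simp
  rw [hLap, hφg, hbp]
  exact final_alg (n : ℝ) ε t C p (hA x) hp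
end

section
/- Let n ≥ 3 be an integer, ξ ∈ ℝⁿ and ε > 0, and let u_{(ξ,ε)} be the standard bubble. Then for each index k ∈ {1,…,n}, the function φ_k(x) = (2ε(x_k − ξ_k)/(ε² + |x−ξ|²)) · u_{(ξ,ε)}(x) satisfies the linearized equation Δφ_k(x) + n(n+2) · u_{(ξ,ε)}(x)^{4/(n−2)} · φ_k(x) = 0 for every x ∈ ℝⁿ. -/
set_option maxHeartbeats 1000000

open Real



lemma aux_D {n : ℕ} (ξ x : EuclideanSpace ℝ (Fin n)) (ε : ℝ) :
    HasFDerivAt (fun y : EuclideanSpace ℝ (Fin n) => ε ^ 2 + ‖y - ξ‖ ^ 2)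
      ((2 : ℕ) • innerSL ℝ (x - ξ)) x := by
  simpa using (((hasFDerivAt_id x).sub_const ξ).norm_sq).const_add (ε ^ 2)

lemma aux1 {n : ℕ} (ξ : EuclideanSpace ℝ (Fin n)) (ε : ℝ) (hε : 0 < ε) (k : Fin n)
    (c p : ℝ) (y : EuclideanSpace ℝ (Fin n)) (i : Fin n) :
    fderiv ℝ (fun z : EuclideanSpace ℝ (Fin n) =>
        c * ((z k - ξ k) * (ε ^ 2 + ‖z - ξ‖ ^ 2) ^ p)) y (EuclideanSpace.single i 1)
      = c * ((y k - ξ k) * ((p * (ε ^ 2 + ‖y - ξ‖ ^ 2) ^ (p - 1)) * (2 * (y i - ξ i)))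
          + (ε ^ 2 + ‖y - ξ‖ ^ 2) ^ p * (if i = k then 1 else 0)) := by
  have hpos : (0:ℝ) < ε ^ 2 + ‖y - ξ‖ ^ 2 := by positivity
  have hk : HasFDerivAt (fun z : EuclideanSpace ℝ (Fin n) => z k - ξ k)
      (EuclideanSpace.proj k : EuclideanSpace ℝ (Fin n) →L[ℝ] ℝ) y :=
    (EuclideanSpace.proj k : EuclideanSpace ℝ (Fin n) →L[ℝ] ℝ).hasFDerivAt.sub_const (ξ k)
  have hDp : HasFDerivAt (fun z : EuclideanSpace ℝ (Fin n) => (ε ^ 2 + ‖z - ξ‖ ^ 2) ^ p)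
      ((p * (ε ^ 2 + ‖y - ξ‖ ^ 2) ^ (p - 1)) • ((2 : ℕ) • innerSL ℝ (y - ξ))) y :=
    (aux_D ξ y ε).rpow_const (Or.inl hpos.ne')
  have ht := ((hk.mul hDp).const_mul c).fderiv
  simp only [Pi.mul_apply, Pi.add_apply] at ht
  rw [ht]
  simp [EuclideanSpace.inner_single_right, EuclideanSpace.single_apply, eq_comm,
    smul_smul, mul_ite, mul_zero]
  split_ifs <;> ring

lemma aux2 {n : ℕ} (ξ : EuclideanSpace ℝ (Fin n)) (ε : ℝ) (hε : 0 < ε) (k i : Fin n)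
    (c p d : ℝ) (x : EuclideanSpace ℝ (Fin n)) :
    fderiv ℝ (fun y : EuclideanSpace ℝ (Fin n) =>
        c * ((y k - ξ k) * ((p * (ε ^ 2 + ‖y - ξ‖ ^ 2) ^ (p - 1)) * (2 * (y i - ξ i)))
          + (ε ^ 2 + ‖y - ξ‖ ^ 2) ^ p * d)) x (EuclideanSpace.single i 1)
      = c * (2 * p * (x i - ξ i) * (ε ^ 2 + ‖x - ξ‖ ^ 2) ^ (p - 1)
              * ((if i = k then 1 else 0) + d)
          + 2 * p * (x k - ξ k) * (ε ^ 2 + ‖x - ξ‖ ^ 2) ^ (p - 1)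
          + 4 * p * (p - 1) * (x k - ξ k) * (x i - ξ i) ^ 2
              * (ε ^ 2 + ‖x - ξ‖ ^ 2) ^ (p - 2)) := by
  have hpos : (0:ℝ) < ε ^ 2 + ‖x - ξ‖ ^ 2 := by positivity
  have hk : HasFDerivAt (fun z : EuclideanSpace ℝ (Fin n) => z k - ξ k)
      (EuclideanSpace.proj k : EuclideanSpace ℝ (Fin n) →L[ℝ] ℝ) x :=
    (EuclideanSpace.proj k : EuclideanSpace ℝ (Fin n) →L[ℝ] ℝ).hasFDerivAt.sub_const (ξ k)
  have hi : HasFDerivAt (fun z : EuclideanSpace ℝ (Fin n) => z i - ξ i)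
      (EuclideanSpace.proj i : EuclideanSpace ℝ (Fin n) →L[ℝ] ℝ) x :=
    (EuclideanSpace.proj i : EuclideanSpace ℝ (Fin n) →L[ℝ] ℝ).hasFDerivAt.sub_const (ξ i)
  have hDp : HasFDerivAt (fun z : EuclideanSpace ℝ (Fin n) => (ε ^ 2 + ‖z - ξ‖ ^ 2) ^ p)
      ((p * (ε ^ 2 + ‖x - ξ‖ ^ 2) ^ (p - 1)) • ((2 : ℕ) • innerSL ℝ (x - ξ))) x :=
    (aux_D ξ x ε).rpow_const (Or.inl hpos.ne')
  have hDp1 : HasFDerivAt (fun z : EuclideanSpace ℝ (Fin n) => (ε ^ 2 + ‖z - ξ‖ ^ 2) ^ (p - 1))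
      (((p - 1) * (ε ^ 2 + ‖x - ξ‖ ^ 2) ^ (p - 1 - 1)) • ((2 : ℕ) • innerSL ℝ (x - ξ))) x :=
    (aux_D ξ x ε).rpow_const (Or.inl hpos.ne')
  have ht := ((hk.mul ((hDp1.const_mul p).mul (hi.const_mul 2))).add
    (hDp.mul_const d)).const_mul c |>.fderiv
  simp only [Pi.mul_apply, Pi.add_apply] at ht
  rw [ht]
  rw [show p - 1 - 1 = p - 2 by ring]
  simp only [ContinuousLinearMap.smul_apply, ContinuousLinearMap.add_apply,
    ContinuousLinearMap.coe_smul', Pi.smul_apply, innerSL_apply_apply, smul_eq_mul,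
    nsmul_eq_mul, Nat.cast_ofNat]
  rw [real_inner_comm]
  rw [EuclideanSpace.inner_single_left]
  simp only [PiLp.proj_apply, PiLp.sub_apply, EuclideanSpace.single_apply, map_one, one_mul,
    mul_ite, mul_zero, mul_one]
  by_cases h : k = i
  · subst h
    simp only [if_pos rfl, if_true, ite_true]
    ring
  · rw [if_neg h, if_neg (fun hh : i = k => h hh.symm)]
    rw [if_pos True.intro]
    ring

theorem stmt_2 (n : ℕ) (hn : 3 ≤ n) (ξ : EuclideanSpace ℝ (Fin n)) (ε : ℝ) (hε : 0 < ε)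
    (k : Fin n) (φ : EuclideanSpace ℝ (Fin n) → ℝ)
    (hφ : ∀ x, φ x = 2 * ε * (x k - ξ k) / (ε ^ 2 + ‖x - ξ‖ ^ 2) * bubble ξ ε x) :
    ∀ x, eLaplacian φ x
        + (n : ℝ) * ((n : ℝ) + 2) * bubble ξ ε x ^ ((4 : ℝ) / ((n : ℝ) - 2)) * φ x = 0 := by
  intro x
  have hn3 : (3:ℝ) ≤ (n:ℝ) := by exact_mod_cast hn
  have hn2 : ((n:ℝ) - 2) ≠ 0 := by linarith
  have hDpos : ∀ y : EuclideanSpace ℝ (Fin n), (0:ℝ) < ε ^ 2 + ‖y - ξ‖ ^ 2 := fun y => by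
    positivity
  -- rewrite φ as a clean power function
  have hφg : φ = fun y : EuclideanSpace ℝ (Fin n) =>
      (2 * ε ^ ((n:ℝ) / 2)) * ((y k - ξ k) * (ε ^ 2 + ‖y - ξ‖ ^ 2) ^ (-(n:ℝ) / 2)) := by
    funext y
    rw [hφ y, bubble]
    have hD := hDpos y
    rw [Real.div_rpow hε.le hD.le]
    have hε2 : ε ^ ((n:ℝ) / 2) = ε * ε ^ (((n:ℝ) - 2) / 2) := by
      rw [show (n:ℝ)/2 = 1 + ((n:ℝ)-2)/2 by ring, Real.rpow_add hε, Real.rpow_one]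
    have hD2 : (ε ^ 2 + ‖y - ξ‖ ^ 2) ^ (-(n:ℝ) / 2)
        = ((ε ^ 2 + ‖y - ξ‖ ^ 2) * (ε ^ 2 + ‖y - ξ‖ ^ 2) ^ (((n:ℝ) - 2) / 2))⁻¹ := by
      rw [show -(n:ℝ)/2 = -(1 + ((n:ℝ)-2)/2) by ring, Real.rpow_neg hD.le,
        Real.rpow_add hD, Real.rpow_one]
    rw [hε2, hD2]
    have h2 : (ε ^ 2 + ‖y - ξ‖ ^ 2) ^ (((n:ℝ) - 2) / 2) ≠ 0 :=
      (Real.rpow_pos_of_pos hD _).ne'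
    field_simp
  have hD := hDpos x
  -- second derivatives in each coordinate direction
  have key : ∀ i : Fin n,
      iteratedFDeriv ℝ 2 φ x ![EuclideanSpace.single i 1, EuclideanSpace.single i 1]
        = (2 * ε ^ ((n:ℝ) / 2)) *
            (2 * (-(n:ℝ)/2) * (x i - ξ i) * (ε ^ 2 + ‖x - ξ‖ ^ 2) ^ (-(n:ℝ)/2 - 1)
                * ((if i = k then 1 else 0) + (if i = k then (1:ℝ) else 0))
              + 2 * (-(n:ℝ)/2) * (x k - ξ k) * (ε ^ 2 + ‖x - ξ‖ ^ 2) ^ (-(n:ℝ)/2 - 1)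
              + 4 * (-(n:ℝ)/2) * (-(n:ℝ)/2 - 1) * (x k - ξ k) * (x i - ξ i) ^ 2
                  * (ε ^ 2 + ‖x - ξ‖ ^ 2) ^ (-(n:ℝ)/2 - 2)) := by
    intro i
    rw [hφg, iteratedFDeriv_two_apply]
    simp only [Matrix.cons_val_zero, Matrix.cons_val_one, Matrix.head_cons]
    have hsmooth : ContDiff ℝ ⊤ (fun y : EuclideanSpace ℝ (Fin n) =>
        (2 * ε ^ ((n:ℝ) / 2)) * ((y k - ξ k) * (ε ^ 2 + ‖y - ξ‖ ^ 2) ^ (-(n:ℝ) / 2))) := by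
      have hDs : ContDiff ℝ ⊤ (fun y : EuclideanSpace ℝ (Fin n) => ε ^ 2 + ‖y - ξ‖ ^ 2) :=
        contDiff_const.add ((contDiff_id.sub contDiff_const).norm_sq ℝ)
      have hrpow : ContDiff ℝ ⊤ (fun y : EuclideanSpace ℝ (Fin n) =>
          (ε ^ 2 + ‖y - ξ‖ ^ 2) ^ (-(n:ℝ) / 2)) := by
        rw [contDiff_iff_contDiffAt]
        intro y
        exact hDs.contDiffAt.rpow_const_of_ne (hDpos y).ne'
      exact contDiff_const.mul
        ((((EuclideanSpace.proj k : EuclideanSpace ℝ (Fin n) →L[ℝ] ℝ).contDiff).sub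
          contDiff_const).mul hrpow)
    have hdiff : DifferentiableAt ℝ (fderiv ℝ (fun y : EuclideanSpace ℝ (Fin n) =>
        (2 * ε ^ ((n:ℝ) / 2)) * ((y k - ξ k) * (ε ^ 2 + ‖y - ξ‖ ^ 2) ^ (-(n:ℝ) / 2)))) x :=
      ((hsmooth.fderiv_right (m := 1) le_top).differentiable one_ne_zero).differentiableAt
    have hswap : fderiv ℝ (fderiv ℝ (fun y : EuclideanSpace ℝ (Fin n) =>
          (2 * ε ^ ((n:ℝ) / 2)) * ((y k - ξ k) * (ε ^ 2 + ‖y - ξ‖ ^ 2) ^ (-(n:ℝ) / 2)))) x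
            (EuclideanSpace.single i 1) (EuclideanSpace.single i 1)
        = fderiv ℝ (fun y : EuclideanSpace ℝ (Fin n) =>
            fderiv ℝ (fun z : EuclideanSpace ℝ (Fin n) =>
              (2 * ε ^ ((n:ℝ) / 2)) * ((z k - ξ k) * (ε ^ 2 + ‖z - ξ‖ ^ 2) ^ (-(n:ℝ) / 2))) y
              (EuclideanSpace.single i 1)) x (EuclideanSpace.single i 1) := by
      rw [fderiv_clm_apply hdiff (differentiableAt_const _)]
      simp
    rw [hswap]
    have hfun : (fun y : EuclideanSpace ℝ (Fin n) =>
        fderiv ℝ (fun z : EuclideanSpace ℝ (Fin n) =>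
          (2 * ε ^ ((n:ℝ) / 2)) * ((z k - ξ k) * (ε ^ 2 + ‖z - ξ‖ ^ 2) ^ (-(n:ℝ) / 2))) y
          (EuclideanSpace.single i 1))
        = fun y : EuclideanSpace ℝ (Fin n) =>
            (2 * ε ^ ((n:ℝ) / 2)) * ((y k - ξ k) *
              (((-(n:ℝ) / 2) * (ε ^ 2 + ‖y - ξ‖ ^ 2) ^ ((-(n:ℝ) / 2) - 1)) * (2 * (y i - ξ i)))
              + (ε ^ 2 + ‖y - ξ‖ ^ 2) ^ (-(n:ℝ) / 2) * (if i = k then 1 else 0)) :=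
      funext fun y => aux1 ξ ε hε k (2 * ε ^ ((n:ℝ) / 2)) (-(n:ℝ) / 2) y i
    rw [hfun]
    exact aux2 ξ ε hε k i (2 * ε ^ ((n:ℝ) / 2)) (-(n:ℝ) / 2) (if i = k then 1 else 0) x
  -- sum up the Laplacian
  have s1 : ∑ i : Fin n, (if i = k then (1:ℝ) else 0) * (x i - ξ i) = x k - ξ k := by
    rw [Finset.sum_eq_single k]
    · simp
    · intro b _ hb
      simp [hb]
    · simp
  have s2 : ∑ i : Fin n, (x i - ξ i) ^ 2 = ‖x - ξ‖ ^ 2 := by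
    rw [EuclideanSpace.norm_eq, Real.sq_sqrt (by positivity)]
    simp [Real.norm_eq_abs, sq_abs]
  have hLap : eLaplacian φ x
      = (2 * ε ^ ((n:ℝ) / 2)) * 4 * (-(n:ℝ)/2) * (ε ^ 2 + ‖x - ξ‖ ^ 2) ^ (-(n:ℝ)/2 - 1)
          * (x k - ξ k)
        + (n:ℝ) * ((2 * ε ^ ((n:ℝ) / 2)) * 2 * (-(n:ℝ)/2) * (x k - ξ k)
          * (ε ^ 2 + ‖x - ξ‖ ^ 2) ^ (-(n:ℝ)/2 - 1))
        + (2 * ε ^ ((n:ℝ) / 2)) * 4 * (-(n:ℝ)/2) * (-(n:ℝ)/2 - 1) * (x k - ξ k)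
          * (ε ^ 2 + ‖x - ξ‖ ^ 2) ^ (-(n:ℝ)/2 - 2) * ‖x - ξ‖ ^ 2 := by
    simp only [eLaplacian]
    rw [Finset.sum_congr rfl (fun i _ => key i)]
    have e1 : ∀ i : Fin n,
        (2 * ε ^ ((n:ℝ) / 2)) *
            (2 * (-(n:ℝ)/2) * (x i - ξ i) * (ε ^ 2 + ‖x - ξ‖ ^ 2) ^ (-(n:ℝ)/2 - 1)
                * ((if i = k then 1 else 0) + (if i = k then (1:ℝ) else 0))
              + 2 * (-(n:ℝ)/2) * (x k - ξ k) * (ε ^ 2 + ‖x - ξ‖ ^ 2) ^ (-(n:ℝ)/2 - 1)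
              + 4 * (-(n:ℝ)/2) * (-(n:ℝ)/2 - 1) * (x k - ξ k) * (x i - ξ i) ^ 2
                  * (ε ^ 2 + ‖x - ξ‖ ^ 2) ^ (-(n:ℝ)/2 - 2))
          = (2 * ε ^ ((n:ℝ) / 2)) * 4 * (-(n:ℝ)/2) * (ε ^ 2 + ‖x - ξ‖ ^ 2) ^ (-(n:ℝ)/2 - 1)
              * ((if i = k then (1:ℝ) else 0) * (x i - ξ i))
            + ((2 * ε ^ ((n:ℝ) / 2)) * 2 * (-(n:ℝ)/2) * (x k - ξ k)
              * (ε ^ 2 + ‖x - ξ‖ ^ 2) ^ (-(n:ℝ)/2 - 1)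
            + (2 * ε ^ ((n:ℝ) / 2)) * 4 * (-(n:ℝ)/2) * (-(n:ℝ)/2 - 1) * (x k - ξ k)
              * (ε ^ 2 + ‖x - ξ‖ ^ 2) ^ (-(n:ℝ)/2 - 2) * (x i - ξ i) ^ 2) := fun i => by
      ring
    rw [Finset.sum_congr rfl (fun i _ => e1 i)]
    rw [Finset.sum_add_distrib, Finset.sum_add_distrib, ← Finset.mul_sum, ← Finset.mul_sum,
      ← Finset.mul_sum, s1, s2, Finset.sum_const, Finset.card_univ, Fintype.card_fin,
      nsmul_eq_mul]
    ring
  -- the nonlinear coefficient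
  have hb : bubble ξ ε x ^ ((4:ℝ) / ((n:ℝ) - 2)) = ε ^ 2 / (ε ^ 2 + ‖x - ξ‖ ^ 2) ^ 2 := by
    rw [bubble, ← Real.rpow_mul (by positivity)]
    rw [show ((n:ℝ) - 2) / 2 * ((4:ℝ) / ((n:ℝ) - 2)) = 2 by field_simp; ring]
    rw [show (2:ℝ) = ((2:ℕ):ℝ) by norm_num, Real.rpow_natCast, div_pow]
  -- conclude
  rw [hLap, hb]
  simp only [hφg]
  have e1 : (ε ^ 2 + ‖x - ξ‖ ^ 2) ^ (-(n:ℝ)/2 - 1)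
      = (ε ^ 2 + ‖x - ξ‖ ^ 2) ^ (-(n:ℝ)/2 - 2) * (ε ^ 2 + ‖x - ξ‖ ^ 2) := by
    rw [show -(n:ℝ)/2 - 1 = (-(n:ℝ)/2 - 2) + 1 by ring, Real.rpow_add hD, Real.rpow_one]
  have e2 : (ε ^ 2 + ‖x - ξ‖ ^ 2) ^ (-(n:ℝ)/2)
      = (ε ^ 2 + ‖x - ξ‖ ^ 2) ^ (-(n:ℝ)/2 - 2) * (ε ^ 2 + ‖x - ξ‖ ^ 2) ^ 2 := by
    rw [← Real.rpow_natCast (ε ^ 2 + ‖x - ξ‖ ^ 2) 2, ← Real.rpow_add hD]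
    congr 1
    push_cast
    ring
  rw [e1, e2]
  field_simp
  ring
end

section
/- Let n ≥ 3 be an integer, ξ ∈ ℝⁿ and ε > 0, and let u_{(ξ,ε)} be the standard bubble. Then the functions |∇u_{(ξ,ε)}|² and u_{(ξ,ε)}^{2n/(n−2)} are integrable on ℝⁿ, and ∫_{ℝⁿ} |∇u_{(ξ,ε)}(x)|² dx = n(n−2) · ∫_{ℝⁿ} u_{(ξ,ε)}(x)^{2n/(n−2)} dx. -/
open MeasureTheory Real Set Filter

lemma bubble_aux1D (ε : ℝ) (hε : 0 < ε) (k j : ℕ) (h : k + 2 ≤ 2*j) :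
    IntegrableOn (fun r : ℝ => r^k / (ε^2+r^2)^j) (Ioi 0) := by
  have hd : ∀ r : ℝ, (0:ℝ) < (ε^2+r^2)^j := fun r => by positivity
  have hcont : Continuous fun r : ℝ => r^k/(ε^2+r^2)^j :=
    Continuous.div (by fun_prop) (by fun_prop) (fun r => (hd r).ne')
  rw [← Ioc_union_Ioi_eq_Ioi (zero_le_one (α := ℝ))]
  refine IntegrableOn.union ?_ ?_
  · exact (hcont.integrableOn_Icc (a := 0) (b := 1)).mono_set Ioc_subset_Icc_self
  · have hexp : (k:ℝ) - 2*j < -1 := by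
      have : (k:ℝ) + 2 ≤ 2*j := by exact_mod_cast h
      linarith
    refine Integrable.mono' (g := fun r : ℝ => r ^ ((k:ℝ) - 2*j))
      (integrableOn_Ioi_rpow_of_lt hexp one_pos)
      hcont.aestronglyMeasurable.restrict ?_
    filter_upwards [ae_restrict_mem measurableSet_Ioi] with r (hr : 1 < r)
    have hr0 : 0 < r := lt_trans one_pos hr
    rw [Real.norm_eq_abs, abs_of_nonneg (by positivity)]
    have h1 : (r^2)^j ≤ (ε^2+r^2)^j := by
      apply pow_le_pow_left₀ (by positivity); linarith [sq_nonneg ε]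
    calc r^k/(ε^2+r^2)^j ≤ r^k/(r^2)^j := by
          apply div_le_div_of_nonneg_left (by positivity) (by positivity) h1
      _ = r ^ ((k:ℝ) - 2*j) := by
          rw [← pow_mul, ← Real.rpow_natCast r k, ← Real.rpow_natCast r (2*j),
            ← Real.rpow_sub hr0]
          push_cast; ring_nf

lemma bubble_auxND {n : ℕ} (ε : ℝ) (hε : 0 < ε) (k j : ℕ) (hkj : n + k < 2*j) :
    Integrable (fun x : EuclideanSpace ℝ (Fin n) => ‖x‖^k / (ε^2+‖x‖^2)^j) := by
  set c : ℝ := min (ε^2) 1 with hc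
  have hc0 : 0 < c := lt_min (by positivity) one_pos
  have hr' : (Module.finrank ℝ (EuclideanSpace ℝ (Fin n)) : ℝ) < 2*(j:ℝ) - k := by
    rw [finrank_euclideanSpace_fin]
    have : (n:ℝ) + k < 2*j := by exact_mod_cast hkj
    linarith
  have hint := (integrable_rpow_neg_one_add_norm_sq
    (μ := (volume : Measure (EuclideanSpace ℝ (Fin n)))) hr').const_mul ((c^j)⁻¹)
  refine hint.mono' ?_ ?_
  · exact (Continuous.div (by fun_prop) (by fun_prop) (fun x => by positivity)).aestronglyMeasurable
  · filter_upwards with x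
    have ht0 : (0:ℝ) < 1 + ‖x‖^2 := by positivity
    rw [Real.norm_eq_abs, abs_of_nonneg (by positivity)]
    have h1 : ‖x‖^k ≤ (1 + ‖x‖^2) ^ ((k:ℝ)/2) := by
      have : ‖x‖^k = (‖x‖^2) ^ ((k:ℝ)/2) := by
        rw [← Real.rpow_natCast ‖x‖ k, ← Real.rpow_natCast ‖x‖ 2, ← Real.rpow_mul (norm_nonneg x)]
        congr 1; push_cast; ring
      rw [this]
      exact Real.rpow_le_rpow (by positivity) (by linarith) (by positivity)
    have h2 : c^j * (1+‖x‖^2)^j ≤ (ε^2+‖x‖^2)^j := by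
      rw [← mul_pow]
      apply pow_le_pow_left₀ (by positivity)
      have hce : c ≤ ε^2 := min_le_left _ _
      have hc1 : c ≤ 1 := min_le_right _ _
      nlinarith [sq_nonneg ‖x‖]
    calc ‖x‖^k/(ε^2+‖x‖^2)^j ≤ (1 + ‖x‖^2) ^ ((k:ℝ)/2) / (c^j * (1+‖x‖^2)^j) := by
          apply div_le_div₀ (by positivity) h1 (by positivity) h2
      _ = (c^j)⁻¹ * ((1:ℝ) + ‖x‖^2) ^ (-(2*(j:ℝ) - k)/2) := by
          have key : ((1:ℝ)+‖x‖^2) ^ (-(2*(j:ℝ)-k)/2)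
              = (1+‖x‖^2)^((k:ℝ)/2) / (1+‖x‖^2)^((j:ℕ):ℝ) := by
            rw [← Real.rpow_sub ht0]; congr 1; ring
          rw [← Real.rpow_natCast (1+‖x‖^2) j, key]
          ring

lemma bubble_ibp (m : ℕ) (ε : ℝ) (hε : 0 < ε) :
    ((m:ℝ)+3) * ∫ r in Ioi (0:ℝ), r^(m+2)/(ε^2+r^2)^(m+2)
      = (2*(m:ℝ)+4) * ∫ r in Ioi (0:ℝ), r^(m+4)/(ε^2+r^2)^(m+3) := by
  have hd : ∀ r : ℝ, (0:ℝ) < ε^2+r^2 := fun r => by positivity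
  set G : ℝ → ℝ := fun r => r^(m+3)/(ε^2+r^2)^(m+2) with hG
  set G' : ℝ → ℝ := fun r =>
    ((m:ℝ)+3)*(r^(m+2)/(ε^2+r^2)^(m+2)) - (2*(m:ℝ)+4)*(r^(m+4)/(ε^2+r^2)^(m+3)) with hG'
  have hderiv : ∀ r : ℝ, HasDerivAt G (G' r) r := by
    intro r
    have h1 : HasDerivAt (fun r : ℝ => r^(m+3)) (((m:ℝ)+3)*r^(m+2)) r := by
      have := hasDerivAt_pow (m+3) r
      simpa [Nat.cast_add] using this
    have h2 : HasDerivAt (fun r : ℝ => (ε^2+r^2)^(m+2))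
        (((m:ℝ)+2)*(ε^2+r^2)^(m+1)*(2*r)) r := by
      have hin : HasDerivAt (fun r : ℝ => ε^2+r^2) (2*r) r := by
        simpa using ((hasDerivAt_pow 2 r).const_add (ε^2))
      have := hin.fun_pow (m+2)
      simpa [Nat.cast_add, mul_comm] using this
    have h3 := h1.div h2 (ne_of_gt (by positivity))
    have key : ∀ s u : ℝ, s ≠ 0 →
        ((m:ℝ)+3)*(u^(m+2)/s^(m+2)) - (2*(m:ℝ)+4)*(u^(m+4)/s^(m+3))
          = (((m:ℝ)+3)*u^(m+2)*s^(m+2) - u^(m+3)*(((m:ℝ)+2)*s^(m+1)*(2*u)))/(s^(m+2))^2 := by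
      intro s u hs
      field_simp
      ring
    have := key (ε^2+r^2) r (hd r).ne'
    rw [hG']
    simp only []
    rw [this]
    exact h3
  have hint1 := (bubble_aux1D ε hε (m+2) (m+2) (by omega)).const_mul ((m:ℝ)+3)
  have hint2 := (bubble_aux1D ε hε (m+4) (m+3) (by omega)).const_mul (2*(m:ℝ)+4)
  have hintG' : IntegrableOn G' (Ioi 0) := hint1.sub hint2
  have hcont : Continuous G :=
    Continuous.div (by fun_prop) (by fun_prop) (fun r => by positivity)
  have htop : Tendsto G atTop (nhds 0) := by
    apply squeeze_zero' (g := fun r : ℝ => r ^ (-((m:ℝ)+1)))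
    · filter_upwards [eventually_ge_atTop (1:ℝ)] with r hr
      positivity
    · filter_upwards [eventually_ge_atTop (1:ℝ)] with r hr
      have hr0 : 0 < r := lt_of_lt_of_le one_pos hr
      have h1 : (r^2)^(m+2) ≤ (ε^2+r^2)^(m+2) := by
        apply pow_le_pow_left₀ (by positivity); linarith [sq_nonneg ε]
      calc G r ≤ r^(m+3)/(r^2)^(m+2) :=
            div_le_div_of_nonneg_left (by positivity) (by positivity) h1
        _ = r ^ (-((m:ℝ)+1)) := by
            rw [← pow_mul, ← Real.rpow_natCast r (m+3), ← Real.rpow_natCast r (2*(m+2)),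
              ← Real.rpow_sub hr0]
            congr 1; push_cast; ring
    · exact tendsto_rpow_neg_atTop (by positivity)
  have hibp := integral_Ioi_of_hasDerivAt_of_tendsto
    (hcont.continuousWithinAt) (fun x _ => hderiv x) hintG' htop
  have hG0 : G 0 = 0 := by simp [hG]
  rw [hG0, sub_zero] at hibp
  have hsub : ∫ r in Ioi (0:ℝ), G' r
      = (((m:ℝ)+3) * ∫ r in Ioi (0:ℝ), r^(m+2)/(ε^2+r^2)^(m+2))
        - ((2*(m:ℝ)+4) * ∫ r in Ioi (0:ℝ), r^(m+4)/(ε^2+r^2)^(m+3)) := by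
    rw [hG']
    rw [integral_sub hint1 hint2, integral_const_mul, integral_const_mul]
  rw [hibp] at hsub
  linarith

lemma bubble_polar (m : ℕ) (ε : ℝ) (k j : ℕ) (ξ : EuclideanSpace ℝ (Fin (m+3))) :
    ∫ x : EuclideanSpace ℝ (Fin (m+3)), ‖x - ξ‖^k / (ε^2+‖x - ξ‖^2)^j
      = ((m:ℝ)+3) * (volume (Metric.ball (0:EuclideanSpace ℝ (Fin (m+3))) 1)).toReal
        * ∫ r in Ioi (0:ℝ), r^(m+2) * (r^k / (ε^2+r^2)^j) := by
  rw [show (fun x : EuclideanSpace ℝ (Fin (m+3)) => ‖x - ξ‖^k / (ε^2+‖x-ξ‖^2)^j)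
      = (fun x => (fun r : ℝ => r^k/(ε^2+r^2)^j) ‖x - ξ‖) from rfl]
  rw [integral_sub_right_eq_self (fun x : EuclideanSpace ℝ (Fin (m+3)) =>
      (fun r : ℝ => r^k/(ε^2+r^2)^j) ‖x‖) ξ]
  rw [MeasureTheory.integral_fun_norm_addHaar volume (fun r : ℝ => r^k/(ε^2+r^2)^j)]
  simp only [finrank_euclideanSpace_fin, nsmul_eq_mul, smul_eq_mul, Nat.add_sub_cancel]
  push_cast
  simp only [Measure.real, add_comm]
  ring

lemma bubble_hasGradient (m : ℕ) (ξ x : EuclideanSpace ℝ (Fin (m+3))) (ε : ℝ) (hε : 0 < ε) :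
    HasGradientAt (bubble ξ ε)
      ((-((((m+3:ℕ):ℝ))-2) * ε ^ ((((m+3:ℕ):ℝ)-2)/2)
        * (ε^2 + ‖x-ξ‖^2) ^ (-((((m+3:ℕ):ℝ)-2)/2) - 1)) • (x - ξ)) x := by
  set p : ℝ := (((m+3:ℕ):ℝ)-2)/2 with hp
  have hs : 0 < ε^2 + ‖x-ξ‖^2 := by positivity
  have h1 : HasFDerivAt (fun y : EuclideanSpace ℝ (Fin (m+3)) => ε^2 + ‖y - ξ‖^2)
      (2 • (innerSL ℝ (x - ξ))) x := by
    have := (((hasFDerivAt_id x).sub_const ξ).norm_sq).const_add (ε^2)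
    simpa using this
  have h2 : HasDerivAt (fun s : ℝ => ε ^ p * s ^ (-p))
      (ε ^ p * (-p * (ε^2 + ‖x-ξ‖^2) ^ (-p - 1))) (ε^2 + ‖x-ξ‖^2) :=
    (Real.hasDerivAt_rpow_const (Or.inl hs.ne')).const_mul _
  have h3 : HasFDerivAt (bubble ξ ε)
      ((ε ^ p * (-p * (ε^2 + ‖x-ξ‖^2) ^ (-p - 1))) • (2 • (innerSL ℝ (x - ξ)))) x := by
    have h4 := h2.comp_hasFDerivAt x h1
    have : bubble ξ ε = fun y : EuclideanSpace ℝ (Fin (m+3)) =>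
        ε ^ p * (ε^2 + ‖y - ξ‖^2) ^ (-p) := by
      funext y
      have hs' : (0:ℝ) < ε^2 + ‖y-ξ‖^2 := by positivity
      rw [bubble, ← hp, Real.div_rpow hε.le hs'.le, Real.rpow_neg hs'.le, div_eq_mul_inv]
    rw [this]
    exact h4
  have hC : (-((((m+3:ℕ):ℝ))-2) * ε ^ p * (ε^2 + ‖x-ξ‖^2) ^ (-p - 1))
      = 2 * (ε ^ p * (-p * (ε^2 + ‖x-ξ‖^2) ^ (-p - 1))) := by
    rw [hp]; ring
  rw [hasGradientAt_iff_hasFDerivAt, hC]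
  refine h3.congr_fderiv ?_
  ext y
  simp only [InnerProductSpace.toDual_apply_apply, ContinuousLinearMap.smul_apply,
    innerSL_apply_apply, real_inner_smul_left, smul_eq_mul, nsmul_eq_mul]
  push_cast
  ring

lemma bubble_grad_norm_sq (m : ℕ) (ξ x : EuclideanSpace ℝ (Fin (m+3))) (ε : ℝ) (hε : 0 < ε) :
    ‖gradient (bubble ξ ε) x‖^2
      = ((m:ℝ)+1)^2 * ε^(m+1) * (‖x-ξ‖^2 / (ε^2+‖x-ξ‖^2)^(m+3)) := by
  set p : ℝ := (((m+3:ℕ):ℝ)-2)/2 with hp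
  have hs : (0:ℝ) < ε^2 + ‖x-ξ‖^2 := by positivity
  rw [(bubble_hasGradient m ξ x ε hε).gradient]
  rw [norm_smul, mul_pow, Real.norm_eq_abs, sq_abs]
  have e1 : (ε ^ p)^2 = ε^(m+1) := by
    rw [← Real.rpow_natCast (ε^p) 2, ← Real.rpow_mul hε.le, ← Real.rpow_natCast ε (m+1)]
    congr 1; rw [hp]; push_cast; ring
  have e2 : ((ε^2 + ‖x-ξ‖^2) ^ (-p - 1))^2 = ((ε^2+‖x-ξ‖^2)^(m+3))⁻¹ := by
    rw [← Real.rpow_natCast ((ε^2 + ‖x-ξ‖^2) ^ (-p-1)) 2, ← Real.rpow_mul hs.le,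
      ← Real.rpow_natCast (ε^2 + ‖x-ξ‖^2) (m+3), ← Real.rpow_neg hs.le]
    congr 1; rw [hp]; push_cast; ring
  rw [mul_pow, mul_pow, e1, e2]
  push_cast
  ring

lemma bubble_pow (m : ℕ) (ξ x : EuclideanSpace ℝ (Fin (m+3))) (ε : ℝ) (hε : 0 < ε) :
    bubble ξ ε x ^ (2 * ((m+3:ℕ):ℝ) / (((m+3:ℕ):ℝ) - 2))
      = ε^(m+3) * (‖x-ξ‖^0 / (ε^2+‖x-ξ‖^2)^(m+3)) := by
  have hs : (0:ℝ) < ε^2 + ‖x-ξ‖^2 := by positivity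
  have hb : (0:ℝ) < ε / (ε^2 + ‖x-ξ‖^2) := by positivity
  have hne : ((m+3:ℕ):ℝ) - 2 ≠ 0 := by
    push_cast; intro h; nlinarith [Nat.cast_nonneg (α := ℝ) m]
  rw [bubble, ← Real.rpow_mul hb.le]
  rw [show (((m+3:ℕ):ℝ) - 2)/2 * (2 * ((m+3:ℕ):ℝ) / (((m+3:ℕ):ℝ) - 2)) = ((m+3:ℕ):ℝ) from by
    have h1 : ((m:ℝ)+1) ≠ 0 := by positivity
    push_cast
    rw [show (m:ℝ) + 3 - 2 = (m:ℝ) + 1 from by ring]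
    field_simp]
  rw [Real.rpow_natCast, div_pow, pow_zero]
  ring

theorem stmt_4 (n : ℕ) (hn : 3 ≤ n) (ξ : EuclideanSpace ℝ (Fin n)) (ε : ℝ) (hε : 0 < ε) :
    Integrable (fun x : EuclideanSpace ℝ (Fin n) => ‖gradient (bubble ξ ε) x‖ ^ 2) ∧
    Integrable (fun x : EuclideanSpace ℝ (Fin n) =>
        bubble ξ ε x ^ (2 * (n : ℝ) / ((n : ℝ) - 2))) ∧
    ∫ x : EuclideanSpace ℝ (Fin n), ‖gradient (bubble ξ ε) x‖ ^ 2
      = (n : ℝ) * ((n : ℝ) - 2)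
        * ∫ x : EuclideanSpace ℝ (Fin n), bubble ξ ε x ^ (2 * (n : ℝ) / ((n : ℝ) - 2)) := by
  obtain ⟨m, rfl⟩ : ∃ m, n = m + 3 := ⟨n - 3, by omega⟩
  -- integrability of the two basic radial profiles, translated by ξ
  have hbase2 : Integrable (fun x : EuclideanSpace ℝ (Fin (m+3)) =>
      ‖x - ξ‖^2 / (ε^2+‖x - ξ‖^2)^(m+3)) := by
    have := (bubble_auxND (n := m+3) ε hε 2 (m+3) (by omega)).comp_sub_right ξ
    exact this
  have hbase0 : Integrable (fun x : EuclideanSpace ℝ (Fin (m+3)) =>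
      ‖x - ξ‖^0 / (ε^2+‖x - ξ‖^2)^(m+3)) := by
    have := (bubble_auxND (n := m+3) ε hε 0 (m+3) (by omega)).comp_sub_right ξ
    exact this
  have hgradeq : (fun x : EuclideanSpace ℝ (Fin (m+3)) => ‖gradient (bubble ξ ε) x‖ ^ 2)
      = fun x => ((m:ℝ)+1)^2 * ε^(m+1) * (‖x-ξ‖^2 / (ε^2+‖x-ξ‖^2)^(m+3)) := by
    funext x; exact bubble_grad_norm_sq m ξ x ε hε
  have hpoweq : (fun x : EuclideanSpace ℝ (Fin (m+3)) =>
      bubble ξ ε x ^ (2 * ((m+3:ℕ):ℝ) / (((m+3:ℕ):ℝ) - 2)))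
      = fun x => ε^(m+3) * (‖x-ξ‖^0 / (ε^2+‖x-ξ‖^2)^(m+3)) := by
    funext x; exact bubble_pow m ξ x ε hε
  refine ⟨?_, ?_, ?_⟩
  · rw [hgradeq]; exact hbase2.const_mul _
  · rw [hpoweq]; exact hbase0.const_mul _
  · rw [hgradeq, hpoweq, integral_const_mul, integral_const_mul,
      bubble_polar m ε 2 (m+3) ξ, bubble_polar m ε 0 (m+3) ξ]
    set V : ℝ := (volume (Metric.ball (0:EuclideanSpace ℝ (Fin (m+3))) 1)).toReal with hV
    -- key 1D identity
    have hkey : ((m:ℝ)+1) * ∫ r in Ioi (0:ℝ), r^(m+4)/(ε^2+r^2)^(m+3)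
        = ((m:ℝ)+3) * ε^2 * ∫ r in Ioi (0:ℝ), r^(m+2)/(ε^2+r^2)^(m+3) := by
      have hibp := bubble_ibp m ε hε
      have hint1 := bubble_aux1D ε hε (m+4) (m+3) (by omega)
      have hint2 := (bubble_aux1D ε hε (m+2) (m+3) (by omega)).const_mul (ε^2)
      have hsplit : ∫ r in Ioi (0:ℝ), r^(m+2)/(ε^2+r^2)^(m+2)
          = (∫ r in Ioi (0:ℝ), r^(m+4)/(ε^2+r^2)^(m+3))
            + ε^2 * ∫ r in Ioi (0:ℝ), r^(m+2)/(ε^2+r^2)^(m+3) := by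
        rw [← integral_const_mul, ← integral_add hint1 hint2]
        apply setIntegral_congr_fun measurableSet_Ioi
        intro r _
        have hs : (0:ℝ) < ε^2+r^2 := by positivity
        field_simp
        ring
      rw [hsplit] at hibp
      linarith
    -- rewrite the polar integrands
    have e2 : (fun r : ℝ => r^(m+2) * (r^2 / (ε^2+r^2)^(m+3)))
        = fun r : ℝ => r^(m+4)/(ε^2+r^2)^(m+3) := by
      funext r; rw [mul_div_assoc']; ring_nf
    have e0 : (fun r : ℝ => r^(m+2) * (r^0 / (ε^2+r^2)^(m+3)))
        = fun r : ℝ => r^(m+2)/(ε^2+r^2)^(m+3) := by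
      funext r; rw [mul_div_assoc']; ring_nf
    rw [e2, e0]
    push_cast
    set I1 : ℝ := ∫ r in Ioi (0:ℝ), r^(m+4)/(ε^2+r^2)^(m+3)
    set I2 : ℝ := ∫ r in Ioi (0:ℝ), r^(m+2)/(ε^2+r^2)^(m+3)
    linear_combination ((m:ℝ)+1)*((m:ℝ)+3)*V*ε^(m+1) * hkey
end

section
/- Let n be a positive integer, let W: {1,…,n}⁴ → ℝ be any tensor, and define H_{ik}(x) = Σ_{p,q=1}^n W_{ipkq} x_p x_q. Let η: ℝ → ℝ be a smooth function with η(t) = 1 for t ≤ 1 and η(t) = 0 for t ≥ 2, let N₀ ≥ 1 be an integer, and for each integer N ≥ N₀ set y_N = (1/N, 0, …, 0) ∈ ℝⁿ. Then for each pair of indices i,k, the series h_{ik}(x) = Σ_{N=N₀}^∞ η(4N² |x − y_N|) · 2^{−N} (2^{−N} − |x − y_N|²) · H_{ik}(x − y_N) converges for every x ∈ ℝⁿ and defines a C^∞ (infinitely differentiable) function h_{ik}: ℝⁿ → ℝ. -/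
open scoped Topology

/-- The quadratic polynomial `H_{ik}(x) = Σ_{p,q} W_{ipkq} x_p x_q` on `ℝⁿ`. -/
def Hqf {n : ℕ} (W : Fin n → Fin n → Fin n → Fin n → ℝ) (i k : Fin n)
    (x : EuclideanSpace ℝ (Fin n)) : ℝ :=
  ∑ p, ∑ q, W i p k q * x p * x q

section Aux

variable {E : Type*} [NormedAddCommGroup E] [NormedSpace ℝ E]
variable {F : Type*} [NormedAddCommGroup F] [NormedSpace ℝ F]

lemma fderiv_comp_sub' (g : E → F) (a x : E) :
    fderiv ℝ (fun z => g (z - a)) x = fderiv ℝ g (x - a) := by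
  by_cases h : DifferentiableAt ℝ g (x - a)
  · have h1 : HasFDerivAt (fun z => g (z - a))
        ((fderiv ℝ g (x - a)).comp (ContinuousLinearMap.id ℝ E)) x :=
      h.hasFDerivAt.comp x ((hasFDerivAt_id x).sub_const a)
    simpa using h1.fderiv
  · have h2 : ¬ DifferentiableAt ℝ (fun z => g (z - a)) x := by
      intro hd
      have h3 : DifferentiableAt ℝ ((fun z => g (z - a)) ∘ (fun w => w + a)) (x - a) := by
        apply DifferentiableAt.comp
        · rw [sub_add_cancel]; exact hd
        · exact differentiableAt_id.add_const a
      have h4 : ((fun z => g (z - a)) ∘ (fun w => w + a)) = g := by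
        funext w; simp [Function.comp]
      rw [h4] at h3
      exact h h3
    rw [fderiv_zero_of_not_differentiableAt h, fderiv_zero_of_not_differentiableAt h2]

lemma iteratedFDeriv_comp_sub'' (g : E → F) (a : E) (k : ℕ) :
    iteratedFDeriv ℝ k (fun z => g (z - a)) = fun x => iteratedFDeriv ℝ k g (x - a) := by
  induction k with
  | zero =>
    funext x; ext m; simp [iteratedFDeriv_zero_apply]
  | succ k ih =>
    funext x
    rw [iteratedFDeriv_succ_eq_comp_left, iteratedFDeriv_succ_eq_comp_left]
    simp only [Function.comp_apply]
    congr 1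
    rw [ih]
    exact fderiv_comp_sub' (iteratedFDeriv ℝ k g) a x

lemma norm_iteratedFDeriv_comp_smul' (g : E → F) (hg : ContDiff ℝ (⊤ : ℕ∞) g)
    (c : ℝ) (k : ℕ) (x : E) :
    ‖iteratedFDeriv ℝ k (fun z => g (c • z)) x‖ ≤ |c| ^ k * ‖iteratedFDeriv ℝ k g (c • x)‖ := by
  have hfun : (fun z => g (c • z)) = g ∘ (c • ContinuousLinearMap.id ℝ E) := by
    funext z; simp
  have h := (c • ContinuousLinearMap.id ℝ E).iteratedFDeriv_comp_right (i := k) hg x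
    (by exact_mod_cast le_top)
  rw [hfun, h]
  have hid : (c • ContinuousLinearMap.id ℝ E) x = c • x := by simp
  rw [hid]
  refine le_trans (ContinuousMultilinearMap.norm_compContinuousLinearMap_le _ _) ?_
  have hb : ‖c • ContinuousLinearMap.id ℝ E‖ ≤ |c| := by
    refine le_trans (ContinuousLinearMap.opNorm_smul_le _ _) ?_
    rw [Real.norm_eq_abs]
    calc |c| * ‖ContinuousLinearMap.id ℝ E‖ ≤ |c| * 1 :=
      mul_le_mul_of_nonneg_left (ContinuousLinearMap.norm_id_le) (abs_nonneg c)
    _ = |c| := mul_one _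
  calc ‖iteratedFDeriv ℝ k g (c • x)‖ * ∏ _i : Fin k, ‖c • ContinuousLinearMap.id ℝ E‖
      = ‖iteratedFDeriv ℝ k g (c • x)‖ * ‖c • ContinuousLinearMap.id ℝ E‖ ^ k := by
        rw [Finset.prod_const, Finset.card_univ, Fintype.card_fin]
    _ ≤ ‖iteratedFDeriv ℝ k g (c • x)‖ * |c| ^ k := by
        exact mul_le_mul_of_nonneg_left (pow_le_pow_left₀ (norm_nonneg _) hb k) (norm_nonneg _)
    _ = |c| ^ k * ‖iteratedFDeriv ℝ k g (c • x)‖ := mul_comm _ _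

end Aux

lemma Hqf_smul {n : ℕ} (W : Fin n → Fin n → Fin n → Fin n → ℝ) (i k : Fin n)
    (c : ℝ) (z : EuclideanSpace ℝ (Fin n)) :
    Hqf W i k (c • z) = c ^ 2 * Hqf W i k z := by
  simp only [Hqf, Finset.mul_sum]
  refine Finset.sum_congr rfl fun p _ => Finset.sum_congr rfl fun q _ => ?_
  have h1 : (c • z) p = c * z p := rfl
  have h2 : (c • z) q = c * z q := rfl
  rw [h1, h2]; ring

lemma contDiff_Hqf {n : ℕ} (W : Fin n → Fin n → Fin n → Fin n → ℝ) (i k : Fin n) :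
    ContDiff ℝ (⊤ : ℕ∞) (Hqf W i k) := by
  have hterm : ∀ p q : Fin n, ContDiff ℝ (⊤ : ℕ∞)
      (fun x : EuclideanSpace ℝ (Fin n) => W i p k q * x p * x q) := by
    intro p q
    have h1 : ContDiff ℝ (⊤ : ℕ∞) (fun x : EuclideanSpace ℝ (Fin n) => x p) :=
      by fun_prop
    have h2 : ContDiff ℝ (⊤ : ℕ∞) (fun x : EuclideanSpace ℝ (Fin n) => x q) :=
      by fun_prop
    exact (contDiff_const.mul h1).mul h2
  unfold Hqf
  exact ContDiff.sum fun p _ => ContDiff.sum fun q _ => hterm p q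

set_option maxHeartbeats 2000000 in
theorem stmt_11 (n : ℕ) (hn : 0 < n) (W : Fin n → Fin n → Fin n → Fin n → ℝ)
    (η : ℝ → ℝ) (hη : ContDiff ℝ (⊤ : ℕ∞) η)
    (hη1 : ∀ t : ℝ, t ≤ 1 → η t = 1) (hη2 : ∀ t : ℝ, 2 ≤ t → η t = 0)
    (N₀ : ℕ) (hN₀ : 1 ≤ N₀)
    (y : ℕ → EuclideanSpace ℝ (Fin n))
    (hy : ∀ N : ℕ, y N = EuclideanSpace.single ⟨0, hn⟩ ((N : ℝ)⁻¹)) :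
    ∀ i k : Fin n, ∃ h : EuclideanSpace ℝ (Fin n) → ℝ,
      (∀ x : EuclideanSpace ℝ (Fin n),
        HasSum
          (fun N : {N : ℕ // N₀ ≤ N} =>
            η (4 * ((N : ℕ) : ℝ) ^ 2 * ‖x - y N‖) *
              ((2 : ℝ) ^ (-((N : ℕ) : ℤ)) *
                (((2 : ℝ) ^ (-((N : ℕ) : ℤ)) - ‖x - y N‖ ^ 2) * Hqf W i k (x - y N))))
          (h x)) ∧
      ContDiff ℝ (⊤ : ℕ∞) h := by
  intro i k
  -- the cutoff χ and its smoothness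
  have hχ : ContDiff ℝ (⊤ : ℕ∞) (fun x : (EuclideanSpace ℝ (Fin n)) => η ‖x‖) := by
    rw [contDiff_iff_contDiffAt]
    intro x
    by_cases hx : x = 0
    · subst hx
      have heq : (fun x : (EuclideanSpace ℝ (Fin n)) => η ‖x‖) =ᶠ[𝓝 (0 : (EuclideanSpace ℝ (Fin n)))] fun _ => 1 := by
        filter_upwards [Metric.ball_mem_nhds (0 : (EuclideanSpace ℝ (Fin n))) one_pos] with z hz
        exact hη1 _ (le_of_lt (by simpa using hz))
      exact contDiffAt_const.congr_of_eventuallyEq heq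
    · exact hη.contDiffAt.comp x (contDiffAt_norm (𝕜 := ℝ) hx)
  have hH : ContDiff ℝ (⊤ : ℕ∞) (Hqf W i k) := contDiff_Hqf W i k
  -- the two compactly supported profiles
  set P : (EuclideanSpace ℝ (Fin n)) → ℝ := fun w => η ‖w‖ * Hqf W i k w with hPdef
  set Q : (EuclideanSpace ℝ (Fin n)) → ℝ := fun w => η ‖w‖ * (‖w‖ ^ 2 * Hqf W i k w) with hQdef
  have hP : ContDiff ℝ (⊤ : ℕ∞) P := hχ.mul hH
  have hQ : ContDiff ℝ (⊤ : ℕ∞) Q := hχ.mul ((contDiff_norm_sq (𝕜 := ℝ)).mul hH)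
  have hPsupp : HasCompactSupport P := by
    apply HasCompactSupport.intro (isCompact_closedBall (0 : (EuclideanSpace ℝ (Fin n))) 2)
    intro x hx
    have h2 : (2 : ℝ) ≤ ‖x‖ := by
      have := (Metric.mem_closedBall.not.mp hx)
      rw [dist_zero_right] at this
      linarith [not_le.mp this]
    simp only [hPdef, hη2 _ h2, zero_mul]
  have hQsupp : HasCompactSupport Q := by
    apply HasCompactSupport.intro (isCompact_closedBall (0 : (EuclideanSpace ℝ (Fin n))) 2)
    intro x hx
    have h2 : (2 : ℝ) ≤ ‖x‖ := by
      have := (Metric.mem_closedBall.not.mp hx)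
      rw [dist_zero_right] at this
      linarith [not_le.mp this]
    simp only [hQdef, hη2 _ h2, zero_mul]
  -- uniform bounds on all derivatives of P and Q
  have key : ∀ (u : (EuclideanSpace ℝ (Fin n)) → ℝ), ContDiff ℝ (⊤ : ℕ∞) u → HasCompactSupport u →
      ∀ j : ℕ, ∃ C : ℝ, ∀ x, ‖iteratedFDeriv ℝ j u x‖ ≤ C := by
    intro u hu hsupp j
    exact (hsupp.iteratedFDeriv j).exists_bound_of_continuous
      (hu.continuous_iteratedFDeriv (by exact_mod_cast le_top))
  choose CP hCP using key P hP hPsupp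
  choose CQ hCQ using key Q hQ hQsupp
  have hCP0 : ∀ j, 0 ≤ CP j := fun j => le_trans (norm_nonneg _) (hCP j 0)
  have hCQ0 : ∀ j, 0 ≤ CQ j := fun j => le_trans (norm_nonneg _) (hCQ j 0)
  -- the terms of the series
  set F : {N : ℕ // N₀ ≤ N} → (EuclideanSpace ℝ (Fin n)) → ℝ := fun N x =>
    η (4 * ((N : ℕ) : ℝ) ^ 2 * ‖x - y N‖) *
      ((2 : ℝ) ^ (-((N : ℕ) : ℤ)) *
        (((2 : ℝ) ^ (-((N : ℕ) : ℤ)) - ‖x - y N‖ ^ 2) * Hqf W i k (x - y N))) with hF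
  -- basic facts about the scaling constants
  have hm1 : ∀ N : {N : ℕ // N₀ ≤ N}, (1 : ℝ) ≤ ((N : ℕ) : ℝ) := by
    intro N
    exact_mod_cast le_trans hN₀ N.2
  have hc1 : ∀ N : {N : ℕ // N₀ ≤ N}, (1 : ℝ) ≤ 4 * ((N : ℕ) : ℝ) ^ 2 := by
    intro N
    nlinarith [hm1 N]
  have ha_eq : ∀ N : {N : ℕ // N₀ ≤ N},
      (2 : ℝ) ^ (-((N : ℕ) : ℤ)) = ((2 : ℝ)⁻¹) ^ (N : ℕ) := by
    intro N
    rw [zpow_neg, ← inv_zpow, zpow_natCast]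
  have ha_pos : ∀ N : {N : ℕ // N₀ ≤ N}, (0 : ℝ) < (2 : ℝ) ^ (-((N : ℕ) : ℤ)) := by
    intro N
    positivity
  have ha_le1 : ∀ N : {N : ℕ // N₀ ≤ N}, (2 : ℝ) ^ (-((N : ℕ) : ℤ)) ≤ 1 := by
    intro N
    rw [ha_eq N]
    exact pow_le_one₀ (by norm_num) (by norm_num)
  -- the structural identity for each term
  have hFeq : ∀ N : {N : ℕ // N₀ ≤ N},
      F N = fun x =>
        (((2 : ℝ) ^ (-((N : ℕ) : ℤ))) ^ 2 / (4 * ((N : ℕ) : ℝ) ^ 2) ^ 2) •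
          P ((4 * ((N : ℕ) : ℝ) ^ 2) • (x - y N)) +
        (-(((2 : ℝ) ^ (-((N : ℕ) : ℤ))) / (4 * ((N : ℕ) : ℝ) ^ 2) ^ 4)) •
          Q ((4 * ((N : ℕ) : ℝ) ^ 2) • (x - y N)) := by
    intro N
    funext x
    set c : ℝ := 4 * ((N : ℕ) : ℝ) ^ 2 with hc
    set a : ℝ := (2 : ℝ) ^ (-((N : ℕ) : ℤ)) with ha
    set z : (EuclideanSpace ℝ (Fin n)) := x - y N with hz
    have hc0 : (0 : ℝ) < c := lt_of_lt_of_le one_pos (hc1 N)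
    have hnorm : ‖c • z‖ = c * ‖z‖ := by
      rw [norm_smul, Real.norm_eq_abs, abs_of_pos hc0]
    have hHs : Hqf W i k (c • z) = c ^ 2 * Hqf W i k z := Hqf_smul W i k c z
    simp only [hF, hPdef, hQdef, smul_eq_mul, hnorm, hHs]
    have hcne : c ≠ 0 := ne_of_gt hc0
    have haN : a = ((2 : ℝ) ^ (N : ℕ))⁻¹ := by rw [ha, zpow_neg, zpow_natCast]
    have h2N : ((2 : ℝ) ^ (N : ℕ)) ≠ 0 := by positivity
    rw [← hz, ← ha, ← hc]
    rw [haN]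
    field_simp
    ring
  -- smoothness of each term
  have hFsmooth : ∀ N : {N : ℕ // N₀ ≤ N}, ContDiff ℝ (⊤ : ℕ∞) (F N) := by
    intro N
    rw [hFeq N]
    have hin : ContDiff ℝ (⊤ : ℕ∞) (fun x : (EuclideanSpace ℝ (Fin n)) => (4 * ((N : ℕ) : ℝ) ^ 2) • (x - y N)) :=
      (contDiff_id.sub contDiff_const).const_smul _
    exact ((hP.comp hin).const_smul _).add ((hQ.comp hin).const_smul _)
  -- the bound function
  set v : ℕ → {N : ℕ // N₀ ≤ N} → ℝ := fun j N =>
    ((CP j + CQ j) * 4 ^ j) * (((N : ℕ) : ℝ) ^ (2 * j) * ((2 : ℝ)⁻¹) ^ (N : ℕ)) with hv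
  have hvsum : ∀ j : ℕ, Summable (v j) := by
    intro j
    have h1 : Summable (fun m : ℕ => (m : ℝ) ^ (2 * j) * ((2 : ℝ)⁻¹) ^ m) :=
      summable_pow_mul_geometric_of_norm_lt_one (2 * j) (by norm_num)
    have h2 : Summable (fun m : ℕ =>
        ((CP j + CQ j) * 4 ^ j) * ((m : ℝ) ^ (2 * j) * ((2 : ℝ)⁻¹) ^ m)) :=
      h1.mul_left _
    exact h2.subtype _
  -- the key derivative bound
  have hbound : ∀ (j : ℕ) (N : {N : ℕ // N₀ ≤ N}) (x : (EuclideanSpace ℝ (Fin n))),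
      ‖iteratedFDeriv ℝ j (F N) x‖ ≤ v j N := by
    intro j N x
    set c : ℝ := 4 * ((N : ℕ) : ℝ) ^ 2 with hc
    set a : ℝ := (2 : ℝ) ^ (-((N : ℕ) : ℤ)) with ha
    have hc0 : (0 : ℝ) < c := lt_of_lt_of_le one_pos (hc1 N)
    have ha0 : (0 : ℝ) < a := ha_pos N
    set u1 : (EuclideanSpace ℝ (Fin n)) → ℝ := fun x => P (c • (x - y N)) with hu1def
    set u2 : (EuclideanSpace ℝ (Fin n)) → ℝ := fun x => Q (c • (x - y N)) with hu2def
    have hin : ContDiff ℝ (⊤ : ℕ∞) (fun x : (EuclideanSpace ℝ (Fin n)) => c • (x - y N)) :=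
      (contDiff_id.sub contDiff_const).const_smul _
    have hu1 : ContDiff ℝ (⊤ : ℕ∞) u1 := hP.comp hin
    have hu2 : ContDiff ℝ (⊤ : ℕ∞) u2 := hQ.comp hin
    -- bound on the iterated derivative of u1
    have hub : ∀ (u : (EuclideanSpace ℝ (Fin n)) → ℝ) (hu : ContDiff ℝ (⊤ : ℕ∞) u) (Cu : ℝ)
        (hCu : ∀ w, ‖iteratedFDeriv ℝ j u w‖ ≤ Cu),
        ‖iteratedFDeriv ℝ j (fun x => u (c • (x - y N))) x‖ ≤ c ^ j * Cu := by
      intro u hu Cu hCu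
      have htr : iteratedFDeriv ℝ j (fun x : (EuclideanSpace ℝ (Fin n)) => u (c • (x - y N))) x
          = iteratedFDeriv ℝ j (fun z : (EuclideanSpace ℝ (Fin n)) => u (c • z)) (x - y N) := by
        have := iteratedFDeriv_comp_sub'' (fun z : (EuclideanSpace ℝ (Fin n)) => u (c • z)) (y N) j
        exact congrFun this x
      rw [htr]
      calc ‖iteratedFDeriv ℝ j (fun z : (EuclideanSpace ℝ (Fin n)) => u (c • z)) (x - y N)‖
          ≤ |c| ^ j * ‖iteratedFDeriv ℝ j u (c • (x - y N))‖ :=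
            norm_iteratedFDeriv_comp_smul' u hu c j (x - y N)
        _ ≤ |c| ^ j * Cu := by
            exact mul_le_mul_of_nonneg_left (hCu _) (by positivity)
        _ = c ^ j * Cu := by rw [abs_of_pos hc0]
    have hb1 : ‖iteratedFDeriv ℝ j u1 x‖ ≤ c ^ j * CP j := hub P hP (CP j) (hCP j)
    have hb2 : ‖iteratedFDeriv ℝ j u2 x‖ ≤ c ^ j * CQ j := hub Q hQ (CQ j) (hCQ j)
    -- decompose the iterated derivative of F N
    have hsplit : iteratedFDeriv ℝ j (F N) x
        = (a ^ 2 / c ^ 2) • iteratedFDeriv ℝ j u1 x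
          + (-(a / c ^ 4)) • iteratedFDeriv ℝ j u2 x := by
      rw [hFeq N]
      rw [iteratedFDeriv_add_apply' ((hu1.const_smul _).of_le (m := (j : WithTop ℕ∞)) (by exact_mod_cast le_top)).contDiffAt
        ((hu2.const_smul _).of_le (m := (j : WithTop ℕ∞)) (by exact_mod_cast le_top)).contDiffAt]
      rw [iteratedFDeriv_const_smul_apply' (hu1.of_le (m := (j : WithTop ℕ∞)) (by exact_mod_cast le_top)).contDiffAt,
        iteratedFDeriv_const_smul_apply' (hu2.of_le (m := (j : WithTop ℕ∞)) (by exact_mod_cast le_top)).contDiffAt]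
    rw [hsplit]
    have ha1' : a ≤ 1 := ha_le1 N
    have hc1' : (1 : ℝ) ≤ c := hc1 N
    have hcsq : (1 : ℝ) ≤ c ^ 2 := one_le_pow₀ hc1'
    have hc4 : (1 : ℝ) ≤ c ^ 4 := one_le_pow₀ hc1'
    have habs1 : |a ^ 2 / c ^ 2| ≤ a := by
      rw [abs_of_pos (div_pos (pow_pos ha0 2) (pow_pos hc0 2))]
      rw [div_le_iff₀ (pow_pos hc0 2)]
      nlinarith [mul_le_mul_of_nonneg_left ha1' ha0.le,
        mul_le_mul_of_nonneg_left hcsq ha0.le]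
    have habs2 : |(-(a / c ^ 4))| ≤ a := by
      rw [abs_neg, abs_of_pos (div_pos ha0 (pow_pos hc0 4))]
      rw [div_le_iff₀ (pow_pos hc0 4)]
      nlinarith [mul_le_mul_of_nonneg_left hc4 ha0.le]
    calc ‖(a ^ 2 / c ^ 2) • iteratedFDeriv ℝ j u1 x
          + (-(a / c ^ 4)) • iteratedFDeriv ℝ j u2 x‖
        ≤ |a ^ 2 / c ^ 2| * ‖iteratedFDeriv ℝ j u1 x‖
          + |(-(a / c ^ 4))| * ‖iteratedFDeriv ℝ j u2 x‖ := by
          refine le_trans (norm_add_le _ _) ?_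
          rw [norm_smul, norm_smul, Real.norm_eq_abs, Real.norm_eq_abs]
      _ ≤ a * (c ^ j * CP j) + a * (c ^ j * CQ j) := by
          refine add_le_add ?_ ?_
          · exact mul_le_mul habs1 hb1 (norm_nonneg _) (le_of_lt ha0)
          · exact mul_le_mul habs2 hb2 (norm_nonneg _) (le_of_lt ha0)
      _ = (CP j + CQ j) * (a * c ^ j) := by ring
      _ = v j N := by
          simp only [hv]
          rw [ha, ha_eq N, hc]
          rw [mul_pow, ← pow_mul]
          ring
  -- summability of the series at each point
  have hFsummable : ∀ x : (EuclideanSpace ℝ (Fin n)), Summable (fun N : {N : ℕ // N₀ ≤ N} => F N x) := by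
    intro x
    refine Summable.of_norm_bounded (hvsum 0) ?_
    intro N
    have := hbound 0 N x
    rwa [norm_iteratedFDeriv_zero] at this
  -- smoothness of the sum
  have hcont : ContDiff ℝ (⊤ : ℕ∞) (fun x : (EuclideanSpace ℝ (Fin n)) => ∑' N : {N : ℕ // N₀ ≤ N}, F N x) :=
    contDiff_tsum hFsmooth (fun j _ => hvsum j) (fun j N x _ => hbound j N x)
  exact ⟨fun x => ∑' N : {N : ℕ // N₀ ≤ N}, F N x,
    fun x => (hFsummable x).hasSum, hcont⟩
end
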